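/- Under the rigid-embedding hypotheses, there exists an isometric embedding ι : Z₁ → Z₂ such that ι₂ = ι ∘ ι₁. -/

import Mathlib

set_option linter.unusedSectionVars false

open Matrix BigOperators

namespace Greene

/-- A rational number is an integer. -/
def isInt (q : ℚ) : Prop := ∃ m : ℤ, q = (m : ℚ)

section LatticeDefs

variable {ι : Type} [Fintype ι] [DecidableEq ι]
variable {ι' : Type} [Fintype ι'] [DecidableEq ι']

/-- The bilinear form on `ι → ℚ` with (integral) Gram matrix `B`. -/
def qform (B : Matrix ι ι ℤ) (x y : ι → ℚ) : ℚ :=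
  x ⬝ᵥ ((B.map (Int.cast : ℤ → ℚ)) *ᵥ y)

/-- The set of integer vectors: the standard lattice inside `ι → ℚ`. -/
def intVecs (ι : Type) [Fintype ι] [DecidableEq ι] : Set (ι → ℚ) :=
  {x | ∀ i, isInt (x i)}

lemma qform_zero_left (B : Matrix ι ι ℤ) (y : ι → ℚ) : qform B 0 y = 0 :=
  zero_dotProduct _

lemma qform_add_left (B : Matrix ι ι ℤ) (x x' y : ι → ℚ) :
    qform B (x + x') y = qform B x y + qform B x' y := add_dotProduct _ _ _

lemma qform_neg_left (B : Matrix ι ι ℤ) (x y : ι → ℚ) :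
    qform B (-x) y = -qform B x y := neg_dotProduct _ _

/-- The dual lattice `S* = {x ∈ span_ℚ S | ⟨x,y⟩ ∈ ℤ for all y ∈ S}`. -/
def dualOf (B : Matrix ι ι ℤ) (S : Set (ι → ℚ)) : AddSubgroup (ι → ℚ) where
  carrier := {x | x ∈ Submodule.span ℚ S ∧ ∀ y ∈ S, isInt (qform B x y)}
  zero_mem' := ⟨Submodule.zero_mem _, fun y _ => ⟨0, by simp [qform_zero_left]⟩⟩
  add_mem' := by
    intro a b ha hb
    refine ⟨Submodule.add_mem _ ha.1 hb.1, fun y hy => ?_⟩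
    obtain ⟨m, hm⟩ := ha.2 y hy
    obtain ⟨m', hm'⟩ := hb.2 y hy
    exact ⟨m + m', by rw [qform_add_left, hm, hm']; push_cast; ring⟩
  neg_mem' := by
    intro a ha
    refine ⟨Submodule.neg_mem _ ha.1, fun y hy => ?_⟩
    obtain ⟨m, hm⟩ := ha.2 y hy
    exact ⟨-m, by rw [qform_neg_left, hm]; push_cast; ring⟩

/-- Characteristic covectors: `χ ∈ S*` with `⟨χ,y⟩ ≡ ⟨y,y⟩ (mod 2)` for all `y ∈ S`. -/
def CharOf (B : Matrix ι ι ℤ) (S : Set (ι → ℚ)) : Set (ι → ℚ) :=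
  {χ | χ ∈ dualOf B S ∧ ∀ y ∈ S, ∃ m : ℤ, qform B χ y - qform B y y = 2 * (m : ℚ)}

/-- Two covectors are in the same class mod `2S`. -/
def SameClass (S : Set (ι → ℚ)) (χ χ' : ι → ℚ) : Prop :=
  ∃ y ∈ S, χ' = χ + (2 : ℚ) • y

/-- Short characteristic covectors: minimal norm in their class mod `2S`. -/
def ShortOf (B : Matrix ι ι ℤ) (S : Set (ι → ℚ)) : Set (ι → ℚ) :=
  {χ | χ ∈ CharOf B S ∧ ∀ χ' ∈ CharOf B S, SameClass S χ χ' → qform B χ χ ≤ qform B χ' χ'}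

/-- Rank of a lattice: dimension of its rational span. -/
noncomputable def rkOf (S : Set (ι → ℚ)) : ℕ := Module.finrank ℚ (Submodule.span ℚ S)

/-- The lattice `S` sitting inside its dual. -/
def latIn (B : Matrix ι ι ℤ) (S : Set (ι → ℚ)) : AddSubgroup (dualOf B S) :=
  AddSubgroup.closure {x | (x : ι → ℚ) ∈ S}

/-- The discriminant group `S*/S`. -/
def disc (B : Matrix ι ι ℤ) (S : Set (ι → ℚ)) : Type :=
  dualOf B S ⧸ latIn B S

noncomputable instance (B : Matrix ι ι ℤ) (S : Set (ι → ℚ)) : AddCommGroup (disc B S) :=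
  inferInstanceAs (AddCommGroup (dualOf B S ⧸ latIn B S))

/-- The class of a dual vector in the discriminant group. -/
def dmk (B : Matrix ι ι ℤ) (S : Set (ι → ℚ)) {x : ι → ℚ} (hx : x ∈ dualOf B S) :
    disc B S := QuotientAddGroup.mk (⟨x, hx⟩ : dualOf B S)

/-- `S` is an additive subgroup (a sublattice, when contained in a lattice). -/
def IsLat (S : Set (ι → ℚ)) : Prop :=
  (0 : ι → ℚ) ∈ S ∧ ∀ x ∈ S, ∀ y ∈ S, x - y ∈ S

/-- The form is integer valued on `S`. -/
def IntegralOn (B : Matrix ι ι ℤ) (S : Set (ι → ℚ)) : Prop :=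
  ∀ x ∈ S, ∀ y ∈ S, isInt (qform B x y)

/-- Unimodularity: the dual lattice equals the lattice. -/
def UnimodularOn (B : Matrix ι ι ℤ) (S : Set (ι → ℚ)) : Prop :=
  ((dualOf B S : AddSubgroup (ι → ℚ)) : Set (ι → ℚ)) = S

/-- Positive definiteness of the form on the span of `S`. -/
def PosDefOn (B : Matrix ι ι ℤ) (S : Set (ι → ℚ)) : Prop :=
  ∀ x ∈ Submodule.span ℚ S, x ≠ 0 → 0 < qform B x x

/-- Orthogonality of two sublattices. -/
def OrthogonalSets (B : Matrix ι ι ℤ) (S T : Set (ι → ℚ)) : Prop :=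
  ∀ x ∈ S, ∀ y ∈ T, qform B x y = 0

/-- `S, T` are complementary sublattices of `L`: orthogonal with ranks summing to `rk L`. -/
noncomputable def ComplementaryIn (B : Matrix ι ι ℤ) (L S T : Set (ι → ℚ)) : Prop :=
  OrthogonalSets B S T ∧ rkOf S + rkOf T = rkOf L

/-- `S ⊆ L` is a primitive sublattice: the restriction map `L* → S*` surjects. -/
def PrimitiveIn (B : Matrix ι ι ℤ) (L S : Set (ι → ℚ)) : Prop :=
  ∀ x ∈ dualOf B S, ∃ z ∈ dualOf B L, ∀ u ∈ S, qform B z u = qform B x u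

/-- `s` is the signature of the form restricted to the span of `S` (Sylvester form). -/
def IsSignatureOf (B : Matrix ι ι ℤ) (S : Set (ι → ℚ)) (s : ℤ) : Prop :=
  ∃ (p q : ℕ) (v : Fin (p + q) → (ι → ℚ)),
    (∀ i, v i ∈ Submodule.span ℚ S) ∧
    Submodule.span ℚ (Set.range v) = Submodule.span ℚ S ∧
    LinearIndependent ℚ v ∧
    (∀ i j, i ≠ j → qform B (v i) (v j) = 0) ∧
    (∀ i : Fin (p + q),
      if (i : ℕ) < p then 0 < qform B (v i) (v i) else qform B (v i) (v i) < 0) ∧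
    s = (p : ℤ) - (q : ℤ)

/-- `S` admits an orthonormal basis of `n` elements, i.e. `S ≅ ℤⁿ`. -/
def HasOrthonormalBasis (B : Matrix ι ι ℤ) (S : Set (ι → ℚ)) (n : ℕ) : Prop :=
  ∃ v : Fin n → (ι → ℚ), (∀ i, v i ∈ S) ∧
    (∀ i j, qform B (v i) (v j) = if i = j then 1 else 0) ∧
    (∀ x ∈ S, ∃ c : Fin n → ℤ, x = ∑ i, (c i : ℚ) • v i)

/-- Isomorphism of lattices: an additive bijection preserving the forms. -/
def LatIso (B : Matrix ι ι ℤ) (S : Set (ι → ℚ)) (B' : Matrix ι' ι' ℤ) (S' : Set (ι' → ℚ)) :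
    Prop :=
  ∃ f : (ι → ℚ) → (ι' → ℚ), Set.BijOn f S S' ∧
    (∀ x ∈ S, ∀ y ∈ S, f (x + y) = f x + f y) ∧
    (∀ x ∈ S, ∀ y ∈ S, qform B' (f x) (f y) = qform B x y)

/-- An isomorphism of the torsors `C(S₁) → C(S₂)` (given on representatives by `Φ`),
covering the group isomorphism `ψ` of discriminant groups. -/
def TorsorMapIso (B₁ : Matrix ι ι ℤ) (S₁ : Set (ι → ℚ))
    (B₂ : Matrix ι' ι' ℤ) (S₂ : Set (ι' → ℚ))
    (Φ : (ι → ℚ) → (ι' → ℚ)) (ψ : disc B₁ S₁ ≃+ disc B₂ S₂) : Prop :=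
  (∀ χ ∈ CharOf B₁ S₁, Φ χ ∈ CharOf B₂ S₂) ∧
  (∀ χ ∈ CharOf B₁ S₁, ∀ χ' ∈ CharOf B₁ S₁,
    (SameClass S₁ χ χ' ↔ SameClass S₂ (Φ χ) (Φ χ'))) ∧
  (∀ μ ∈ CharOf B₂ S₂, ∃ χ ∈ CharOf B₁ S₁, SameClass S₂ (Φ χ) μ) ∧
  (∀ χ ∈ CharOf B₁ S₁, ∀ χ' ∈ CharOf B₁ S₁,
    ∀ (x : ι → ℚ) (y : ι' → ℚ) (hx : x ∈ dualOf B₁ S₁) (hy : y ∈ dualOf B₂ S₂),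
      χ' = χ + (2 : ℚ) • x → Φ χ' = Φ χ + (2 : ℚ) • y →
      ψ (dmk B₁ S₁ hx) = dmk B₂ S₂ hy)

/-- Compatibility of `Φ` with the `d`-invariants: `d₂([Φ χ]) = ε · d₁([χ])`,
where `d` is the minimum of `(|χ'|² - rk)/4` over the class. -/
noncomputable def DCompat (B₁ : Matrix ι ι ℤ) (S₁ : Set (ι → ℚ))
    (B₂ : Matrix ι' ι' ℤ) (S₂ : Set (ι' → ℚ))
    (ε : ℚ) (Φ : (ι → ℚ) → (ι' → ℚ)) : Prop :=
  ∀ χ ∈ CharOf B₁ S₁, ∀ q : ℚ,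
    IsLeast {t | ∃ χ' ∈ CharOf B₁ S₁, SameClass S₁ χ χ' ∧
      t = (qform B₁ χ' χ' - (rkOf S₁ : ℚ)) / 4} q →
    IsLeast {t | ∃ μ ∈ CharOf B₂ S₂, SameClass S₂ (Φ χ) μ ∧
      t = (qform B₂ μ μ - (rkOf S₂ : ℚ)) / 4} (ε * q)

/-- Compatibility of `Φ` with the `ρ`-invariants: `ρ₂([Φ χ]) ≡ ε · ρ₁([χ]) (mod 2)`. -/
def RhoCompat (B₁ : Matrix ι ι ℤ) (S₁ : Set (ι → ℚ))
    (B₂ : Matrix ι' ι' ℤ) (S₂ : Set (ι' → ℚ))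
    (ε : ℚ) (Φ : (ι → ℚ) → (ι' → ℚ)) : Prop :=
  ∀ χ ∈ CharOf B₁ S₁, ∀ s₁ s₂ : ℤ, IsSignatureOf B₁ S₁ s₁ → IsSignatureOf B₂ S₂ s₂ →
    ∃ m : ℤ, (qform B₂ (Φ χ) (Φ χ) - (s₂ : ℚ)) / 4 - ε * ((qform B₁ χ χ - (s₁ : ℚ)) / 4)
      = 2 * (m : ℚ)

/-- The `d`-invariants `(C(S₁), d₁)` and `(C(S₂), ε·d₂)` are isomorphic. -/
noncomputable def DIso (B₁ : Matrix ι ι ℤ) (S₁ : Set (ι → ℚ))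
    (B₂ : Matrix ι' ι' ℤ) (S₂ : Set (ι' → ℚ)) (ε : ℚ) : Prop :=
  ∃ (Φ : (ι → ℚ) → (ι' → ℚ)) (ψ : disc B₁ S₁ ≃+ disc B₂ S₂),
    TorsorMapIso B₁ S₁ B₂ S₂ Φ ψ ∧ DCompat B₁ S₁ B₂ S₂ ε Φ

end LatticeDefs

/-- An abstract integral lattice, presented by its Gram matrix. -/
structure IntLattice where
  n : ℕ
  B : Matrix (Fin n) (Fin n) ℤ
  symm : B.IsSymm
  nondeg : B.det ≠ 0

/-- The Gram matrix of the orthogonal direct sum `Λ₁ ⊥ Λ₂`. -/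
def glueGram (L₁ L₂ : IntLattice) :
    Matrix (Fin L₁.n ⊕ Fin L₂.n) (Fin L₁.n ⊕ Fin L₂.n) ℤ :=
  Matrix.fromBlocks L₁.B 0 0 L₂.B

/-- The glue lattice `Λ₁ ⊕_ψ Λ₂ = {x + y ∈ Λ₁* ⊕ Λ₂* : ψ(x̄) = ȳ}`. -/
def glueSet (L₁ L₂ : IntLattice)
    (ψ : disc L₁.B (intVecs (Fin L₁.n)) ≃+ disc L₂.B (intVecs (Fin L₂.n))) :
    Set (Fin L₁.n ⊕ Fin L₂.n → ℚ) :=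
  {w | ∃ (h₁ : (w ∘ Sum.inl) ∈ dualOf L₁.B (intVecs (Fin L₁.n)))
        (h₂ : (w ∘ Sum.inr) ∈ dualOf L₂.B (intVecs (Fin L₂.n))),
        ψ (dmk _ _ h₁) = dmk _ _ h₂}

/-- `Λ₁` embedded in the first factor of `Λ₁* ⊕ Λ₂*`. -/
def inlLat (L₁ L₂ : IntLattice) : Set (Fin L₁.n ⊕ Fin L₂.n → ℚ) :=
  {w | (w ∘ Sum.inl) ∈ intVecs (Fin L₁.n) ∧ w ∘ Sum.inr = 0}

/-- `Λ₂` embedded in the second factor of `Λ₁* ⊕ Λ₂*`. -/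
def inrLat (L₁ L₂ : IntLattice) : Set (Fin L₁.n ⊕ Fin L₂.n → ℚ) :=
  {w | (w ∘ Sum.inr) ∈ intVecs (Fin L₂.n) ∧ w ∘ Sum.inl = 0}

/-- Stabilization `S ⊕ ℤᵏ`. -/
def stabSet {ι : Type} [Fintype ι] [DecidableEq ι] (S : Set (ι → ℚ)) (k : ℕ) :
    Set (ι ⊕ Fin k → ℚ) :=
  {w | (w ∘ Sum.inl) ∈ S ∧ ∀ j, isInt (w (Sum.inr j))}

/-- A finite loopless multigraph, with a reference orientation of each edge. -/
structure MultiGraph where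
  nV : ℕ
  nE : ℕ
  hd : Fin nE → Fin nV
  tl : Fin nE → Fin nV
  loopless : ∀ e, hd e ≠ tl e

namespace MultiGraph

/-- The boundary map `C₁(G;ℚ) → C₀(G;ℚ)`, `∂ e = head(e) − tail(e)`. -/
def bndry (G : MultiGraph) (x : Fin G.nE → ℚ) : Fin G.nV → ℚ :=
  fun v => ∑ e, x e * ((if G.hd e = v then 1 else 0) - (if G.tl e = v then 1 else 0))

/-- The flow lattice `ℱ(G) = ker ∂ ∩ C₁(G;ℤ)`. -/
def flowSet (G : MultiGraph) : Set (Fin G.nE → ℚ) :=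
  {x | (∀ e, isInt (x e)) ∧ G.bndry x = 0}

/-- The cut lattice `𝒞(G) = im ∂* ∩ C₁(G;ℤ)`. -/
def cutSet (G : MultiGraph) : Set (Fin G.nE → ℚ) :=
  {x | (∀ e, isInt (x e)) ∧ ∃ g : Fin G.nV → ℚ, ∀ e, x e = g (G.hd e) - g (G.tl e)}

/-- Reachability using only edges from the set `A`. -/
def ReachIn (G : MultiGraph) (A : Set (Fin G.nE)) : Fin G.nV → Fin G.nV → Prop :=
  Relation.ReflTransGen
    (fun u v => ∃ e ∈ A, (G.hd e = u ∧ G.tl e = v) ∨ (G.hd e = v ∧ G.tl e = u))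

def Connected (G : MultiGraph) : Prop := ∀ u v, G.ReachIn Set.univ u v

/-- 2-edge-connectedness: connected, and removing any one edge leaves it connected. -/
def TwoEdgeConnected (G : MultiGraph) : Prop :=
  G.Connected ∧ ∀ e : Fin G.nE, ∀ u v, G.ReachIn {e}ᶜ u v

/-- `C` is the edge set of a cycle of `G`. -/
def IsCycleEdgeSet (G : MultiGraph) (C : Set (Fin G.nE)) : Prop :=
  ∃ k : ℕ, 0 < k ∧ ∃ (e : Fin k → Fin G.nE) (v : Fin k → Fin G.nV),
    Function.Injective e ∧ Function.Injective v ∧ C = Set.range e ∧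
    ∀ i, (G.hd (e i) = v (finRotate k i) ∧ G.tl (e i) = v i) ∨
         (G.tl (e i) = v (finRotate k i) ∧ G.hd (e i) = v i)

/-- A maximal spanning forest: acyclic and realizing all of `G`'s reachability. -/
def IsMaxForest (G : MultiGraph) (F : Finset (Fin G.nE)) : Prop :=
  (∀ C, G.IsCycleEdgeSet C → ¬(C ⊆ (↑F : Set (Fin G.nE)))) ∧
  ∀ u v, G.ReachIn Set.univ u v → G.ReachIn (↑F) u v

open Classical in
/-- The fundamental cut vector of `e ∈ F`:
`+1` on edges leaving the component `K₁` of the tail of `e` in `F − e`,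
`−1` on edges entering it, `0` otherwise. -/
noncomputable def cutVec (G : MultiGraph) (F : Finset (Fin G.nE)) (e : Fin G.nE) :
    Fin G.nE → ℚ := fun j =>
  (if G.ReachIn (↑(F.erase e)) (G.tl j) (G.tl e) then 1 else 0)
    - (if G.ReachIn (↑(F.erase e)) (G.hd j) (G.tl e) then 1 else 0)

/-- `x` is the fundamental cycle vector of `e ∉ F`: the unique flow supported on
`F ∪ {e}` whose coefficient on `e` is `+1`. -/
def IsFundCycleVec (G : MultiGraph) (F : Finset (Fin G.nE)) (e : Fin G.nE)
    (x : Fin G.nE → ℚ) : Prop :=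
  G.bndry x = 0 ∧ (∀ j, j ∉ F → j ≠ e → x j = 0) ∧ x e = 1

/-- Reorienting the edges of `G`: `o e = true` keeps the reference direction. -/
def reorient (G : MultiGraph) (o : Fin G.nE → Bool) : MultiGraph :=
  { G with
    hd := fun e => if o e then G.hd e else G.tl e
    tl := fun e => if o e then G.tl e else G.hd e
    loopless := by
      intro e
      by_cases h : o e = true
      · simpa [h] using G.loopless e
      · simpa [h] using (G.loopless e).symm }

end MultiGraph

/-- A 2-isomorphism: a bijection of edge sets preserving edge sets of cycles. -/
def TwoIsomorphic (G G' : MultiGraph) : Prop :=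
  ∃ σ : Fin G.nE ≃ Fin G'.nE, ∀ C, G.IsCycleEdgeSet C ↔ G'.IsCycleEdgeSet (σ '' C)

section RigidAux
variable {n m₁ m₂ : ℕ}

lemma dot_pos {v : Fin n → ℚ} (hv : v ≠ 0) : 0 < v ⬝ᵥ v := by
  have : ∃ i, v i ≠ 0 := by
    by_contra h; push_neg at h; exact hv (funext h)
  obtain ⟨i, hi⟩ := this
  exact Finset.sum_pos' (fun j _ => mul_self_nonneg _)
    ⟨i, Finset.mem_univ i, mul_self_pos.mpr hi⟩

lemma perp_span {a x : Fin n → ℚ} (ha : a ≠ 0)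
    (h : ∀ u, a ⬝ᵥ u = 0 → x ⬝ᵥ u = 0) : ∃ c : ℚ, x = c • a := by
  set c : ℚ := (x ⬝ᵥ a) / (a ⬝ᵥ a) with hc
  refine ⟨c, ?_⟩
  have hpos := dot_pos ha
  set v : Fin n → ℚ := x - c • a with hv
  have hav : a ⬝ᵥ v = 0 := by
    simp only [hv, dotProduct_sub, dotProduct_smul, smul_eq_mul, hc]
    rw [dotProduct_comm a x]
    field_simp
    ring
  have hxv : x ⬝ᵥ v = 0 := h v hav
  have hvv : v ⬝ᵥ v = 0 := by
    have : v ⬝ᵥ v = x ⬝ᵥ v - c * (a ⬝ᵥ v) := by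
      rw [hv, sub_dotProduct, smul_dotProduct, smul_eq_mul]
    rw [this, hxv, hav]; ring
  have hv0 : v = 0 := by
    by_contra h0
    exact absurd hvv (ne_of_gt (dot_pos h0))
  have := sub_eq_zero.mp (hv ▸ hv0)
  exact this

lemma avoid (a : Fin n → ℚ) (ha : a ≠ 0) (X : Finset (Fin n → ℚ))
    (hX : ∀ x ∈ X, ¬∃ c : ℚ, x = c • a) :
    ∃ u, a ⬝ᵥ u = 0 ∧ ∀ x ∈ X, x ⬝ᵥ u ≠ 0 := by
  classical
  induction X using Finset.induction with
  | empty => exact ⟨0, by simp, by simp⟩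
  | @insert x X hxX ih =>
    obtain ⟨u, hu0, hu⟩ := ih (fun y hy => hX y (Finset.mem_insert_of_mem hy))
    have hx : ¬∃ c : ℚ, x = c • a := hX x (Finset.mem_insert_self x X)
    -- find w with a ⬝ᵥ w = 0, x ⬝ᵥ w ≠ 0
    have hw : ∃ w, a ⬝ᵥ w = 0 ∧ x ⬝ᵥ w ≠ 0 := by
      by_contra hcon
      push_neg at hcon
      exact hx (perp_span ha fun u hu => hcon u hu)
    obtain ⟨w, hw0, hww⟩ := hw
    -- bad values of t
    have key : ∀ y : Fin n → ℚ, y ⬝ᵥ u ≠ 0 ∨ y ⬝ᵥ w ≠ 0 →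
        {t : ℚ | y ⬝ᵥ u + t * (y ⬝ᵥ w) = 0}.Finite := by
      intro y hy
      rcases eq_or_ne (y ⬝ᵥ w) 0 with h | h
      · rcases hy with h' | h'
        · convert Set.finite_empty
          ext t; simp [h]; intro hc; exact h' (by linarith)
        · exact absurd h h'
      · apply Set.Finite.subset (Set.finite_singleton (-(y ⬝ᵥ u) / (y ⬝ᵥ w)))
        intro t ht
        simp only [Set.mem_setOf_eq] at ht
        rw [Set.mem_singleton_iff, eq_div_iff h]
        linarith
    have hbad : (⋃ y ∈ (insert x X : Finset (Fin n → ℚ)),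
        {t : ℚ | y ⬝ᵥ u + t * (y ⬝ᵥ w) = 0}).Finite := by
      apply Set.Finite.biUnion (Finset.finite_toSet _)
      intro y hy
      rcases Finset.mem_insert.mp hy with rfl | hy'
      · exact key y (Or.inr hww)
      · exact key y (Or.inl (hu y hy'))
    obtain ⟨t, ht⟩ := Set.Infinite.nonempty (Set.Infinite.diff (Set.infinite_univ) hbad)
    refine ⟨u + t • w, by simp [dotProduct_add, dotProduct_smul, hu0, hw0], ?_⟩
    intro y hy hzero
    apply ht.2
    refine Set.mem_biUnion hy ?_
    rw [dotProduct_add, dotProduct_smul, smul_eq_mul] at hzero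
    exact hzero

lemma abs_term (s r ε : ℚ) (hε : 0 < ε) (h : s ≠ 0 → ε * |r| ≤ |s|) :
    |s + ε * r| + |s - ε * r| = 2 * |s| + (if s = 0 then 2 * ε * |r| else 0) := by
  rcases eq_or_ne s 0 with rfl | hs
  · simp [abs_mul, abs_of_pos hε]; ring
  · simp only [hs, if_false, add_zero]
    have hεr := h hs
    rcases lt_or_gt_of_ne hs with hneg | hpos
    · have h1 : s + ε * r ≤ 0 := by
        have : ε * r ≤ ε * |r| := by
          have := le_abs_self r
          nlinarith
        have habs : |s| = -s := abs_of_neg hneg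
        nlinarith
      have h2 : s - ε * r ≤ 0 := by
        have : -(ε * r) ≤ ε * |r| := by
          have := neg_abs_le r
          nlinarith
        have habs : |s| = -s := abs_of_neg hneg
        nlinarith
      rw [abs_of_nonpos h1, abs_of_nonpos h2, abs_of_neg hneg]; ring
    · have habs : |s| = s := abs_of_pos hpos
      have h1 : 0 ≤ s + ε * r := by
        have : -(ε * r) ≤ ε * |r| := by have := neg_abs_le r; nlinarith
        nlinarith
      have h2 : 0 ≤ s - ε * r := by
        have : ε * r ≤ ε * |r| := by have := le_abs_self r; nlinarith
        nlinarith
      rw [abs_of_nonneg h1, abs_of_nonneg h2, habs]; ring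

lemma exists_delta {ι : Type} [Fintype ι] (s r : ι → ℚ) :
    ∃ δ : ℚ, 0 < δ ∧ ∀ j, s j ≠ 0 → δ * |r j| ≤ |s j| := by
  classical
  have key : ∀ j : ι, ∃ d : ℚ, 0 < d ∧ (s j ≠ 0 → d * |r j| ≤ |s j|) := by
    intro j
    rcases eq_or_ne (r j) 0 with h | h
    · exact ⟨1, one_pos, fun _ => by simp [h, abs_nonneg]⟩
    · refine ⟨|s j| / |r j| + (if s j = 0 then 1 else 0), ?_, ?_⟩
      · rcases eq_or_ne (s j) 0 with h' | h'
        · simp [h']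
        · simp only [h', if_false, add_zero]
          positivity
      · intro hs
        simp only [hs, if_false, add_zero]
        rw [div_mul_cancel₀]
        exact abs_ne_zero.mpr h
  choose d hd1 hd2 using key
  rcases isEmpty_or_nonempty ι with h | h
  · exact ⟨1, one_pos, fun j => absurd (Finset.mem_univ j) (by simp [Finset.univ_eq_empty])⟩
  · obtain ⟨j₀⟩ := h
    refine ⟨Finset.univ.inf' ⟨j₀, Finset.mem_univ j₀⟩ d, ?_, ?_⟩
    · obtain ⟨j, _, hj⟩ := Finset.exists_mem_eq_inf' ⟨j₀, Finset.mem_univ j₀⟩ d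
      rw [hj]; exact hd1 j
    · intro j hj
      calc Finset.univ.inf' _ d * |r j| ≤ d j * |r j| := by
            apply mul_le_mul_of_nonneg_right (Finset.inf'_le d (Finset.mem_univ j)) (abs_nonneg _)
        _ ≤ |s j| := hd2 j hj

open Classical in
lemma sum_second_diff {ι : Type} [Fintype ι] (s r : ι → ℚ) (ε : ℚ) (hε : 0 < ε)
    (hδ : ∀ j, s j ≠ 0 → ε * |r j| ≤ |s j|) :
    ∑ j, (|s j + ε * r j| + |s j - ε * r j|)
      = 2 * ∑ j, |s j| + 2 * ε * ∑ j ∈ Finset.univ.filter (fun j => s j = 0), |r j| := by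
  have step : ∀ j ∈ Finset.univ, (|s j + ε * r j| + |s j - ε * r j|)
      = 2 * |s j| + (if s j = 0 then 2 * ε * |r j| else 0) :=
    fun j _ => abs_term (s j) (r j) ε hε (hδ j)
  rw [Finset.sum_congr rfl step, Finset.sum_add_distrib]
  congr 1
  · rw [Finset.mul_sum]
  · rw [Finset.sum_filter, Finset.mul_sum]
    apply Finset.sum_congr rfl
    intro j _
    split <;> simp <;> ring

open Classical in
lemma line_identity  (va : Fin m₁ → (Fin n → ℚ)) (vb : Fin m₂ → (Fin n → ℚ))
    (MI : ∀ u, ∑ j, |va j ⬝ᵥ u| = ∑ k, |vb k ⬝ᵥ u|) (a : Fin n → ℚ) (ha : a ≠ 0) :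
    ∑ j ∈ Finset.univ.filter (fun j => ∃ c : ℚ, va j = c • a), |va j ⬝ᵥ a|
      = ∑ k ∈ Finset.univ.filter (fun k => ∃ c : ℚ, vb k = c • a), |vb k ⬝ᵥ a| := by
  set X : Finset (Fin n → ℚ) :=
    (Finset.univ.image va ∪ Finset.univ.image vb).filter (fun x => ¬∃ c : ℚ, x = c • a) with hXdef
  obtain ⟨u, hu0, hu⟩ := avoid a ha X (fun x hx => (Finset.mem_filter.mp hx).2)
  -- parallel iff dot with u is zero
  have hiffa : ∀ j, va j ⬝ᵥ u = 0 ↔ ∃ c : ℚ, va j = c • a := by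
    intro j
    constructor
    · intro h0
      by_contra hnp
      refine hu (va j) ?_ h0
      exact Finset.mem_filter.mpr ⟨Finset.mem_union_left _ (Finset.mem_image_of_mem va (Finset.mem_univ j)), hnp⟩
    · rintro ⟨c, hc⟩
      rw [hc, smul_dotProduct, smul_eq_mul, hu0, mul_zero]
  have hiffb : ∀ k, vb k ⬝ᵥ u = 0 ↔ ∃ c : ℚ, vb k = c • a := by
    intro k
    constructor
    · intro h0
      by_contra hnp
      refine hu (vb k) ?_ h0
      exact Finset.mem_filter.mpr ⟨Finset.mem_union_right _ (Finset.mem_image_of_mem vb (Finset.mem_univ k)), hnp⟩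
    · rintro ⟨c, hc⟩
      rw [hc, smul_dotProduct, smul_eq_mul, hu0, mul_zero]
  obtain ⟨δa, hδa, hda⟩ := exists_delta (fun j => va j ⬝ᵥ u) (fun j => va j ⬝ᵥ a)
  obtain ⟨δb, hδb, hdb⟩ := exists_delta (fun k => vb k ⬝ᵥ u) (fun k => vb k ⬝ᵥ a)
  set ε := min δa δb with hεdef
  have hε : 0 < ε := lt_min hδa hδb
  have key : ∑ j, (|va j ⬝ᵥ u + ε * (va j ⬝ᵥ a)| + |va j ⬝ᵥ u - ε * (va j ⬝ᵥ a)|)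
      = ∑ k, (|vb k ⬝ᵥ u + ε * (vb k ⬝ᵥ a)| + |vb k ⬝ᵥ u - ε * (vb k ⬝ᵥ a)|) := by
    have h1 := MI (u + ε • a)
    have h2 := MI (u - ε • a)
    simp only [dotProduct_add, dotProduct_sub, dotProduct_smul, smul_eq_mul] at h1 h2
    rw [Finset.sum_add_distrib, Finset.sum_add_distrib, h1, h2]
  rw [sum_second_diff _ _ ε hε (fun j hj => le_trans
        (mul_le_mul_of_nonneg_right (min_le_left _ _) (abs_nonneg _)) (hda j hj)),
      sum_second_diff _ _ ε hε (fun k hk => le_trans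
        (mul_le_mul_of_nonneg_right (min_le_right _ _) (abs_nonneg _)) (hdb k hk)),
      MI u] at key
  have key2 : ∑ j ∈ Finset.univ.filter (fun j => va j ⬝ᵥ u = 0), |va j ⬝ᵥ a|
      = ∑ k ∈ Finset.univ.filter (fun k => vb k ⬝ᵥ u = 0), |vb k ⬝ᵥ a| := by
    apply mul_left_cancel₀ (show (2 : ℚ) * ε ≠ 0 by positivity)
    rw [mul_assoc, mul_assoc] at key ⊢
    linarith
  rw [show Finset.univ.filter (fun j => ∃ c : ℚ, va j = c • a)
        = Finset.univ.filter (fun j => va j ⬝ᵥ u = 0) from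
      Finset.filter_congr (fun j _ => by simp [hiffa j]),
      show Finset.univ.filter (fun k => ∃ c : ℚ, vb k = c • a)
        = Finset.univ.filter (fun k => vb k ⬝ᵥ u = 0) from
      Finset.filter_congr (fun k _ => by simp [hiffb k])]
  exact key2

lemma half_ineq  (va : Fin m₁ → (Fin n → ℚ)) (vb : Fin m₂ → (Fin n → ℚ))
    (h : ∀ χ : Fin m₁ → ℤ, (∀ j, χ j = 1 ∨ χ j = -1) →
      ∃ χ' : Fin m₂ → ℤ, (∀ k, χ' k = 1 ∨ χ' k = -1) ∧
        ∀ i, ∑ k, (χ' k : ℚ) * vb k i = ∑ j, (χ j : ℚ) * va j i)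
    (u : Fin n → ℚ) : ∑ j, |va j ⬝ᵥ u| ≤ ∑ k, |vb k ⬝ᵥ u| := by
  classical
  set χ : Fin m₁ → ℤ := fun j => if 0 ≤ va j ⬝ᵥ u then 1 else -1 with hχdef
  have hsgn : ∀ j, χ j = 1 ∨ χ j = -1 := fun j => by
    simp only [hχdef]; split_ifs <;> simp
  obtain ⟨χ', hsgn', heq⟩ := h χ hsgn
  have swap : ∀ {m : ℕ} (c : Fin m → ℤ) (w : Fin m → (Fin n → ℚ)),
      ∑ j, (c j : ℚ) * (w j ⬝ᵥ u) = ∑ i, (∑ j, (c j : ℚ) * w j i) * u i := by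
    intro m c w
    simp only [dotProduct, Finset.mul_sum, Finset.sum_mul]
    rw [Finset.sum_comm]
    apply Finset.sum_congr rfl; intro i _
    apply Finset.sum_congr rfl; intro j _
    ring
  calc ∑ j, |va j ⬝ᵥ u| = ∑ j, (χ j : ℚ) * (va j ⬝ᵥ u) := by
        apply Finset.sum_congr rfl
        intro j _
        simp only [hχdef]
        rcases le_or_gt 0 (va j ⬝ᵥ u) with h' | h'
        · rw [if_pos h', abs_of_nonneg h']; push_cast; ring
        · rw [if_neg (not_le.mpr h'), abs_of_neg h']; push_cast; ring
    _ = ∑ i, (∑ j, (χ j : ℚ) * va j i) * u i := swap χ va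
    _ = ∑ i, (∑ k, (χ' k : ℚ) * vb k i) * u i := by
        apply Finset.sum_congr rfl
        intro i _
        rw [heq i]
    _ = ∑ k, (χ' k : ℚ) * (vb k ⬝ᵥ u) := (swap χ' vb).symm
    _ ≤ ∑ k, |vb k ⬝ᵥ u| := by
        apply Finset.sum_le_sum
        intro k _
        rcases hsgn' k with h' | h' <;> rw [h'] <;> push_cast
        · simp [le_abs_self]
        · simpa using neg_le_abs (vb k ⬝ᵥ u)

lemma equiv_coe_eq {α β : Type} {s s' : Finset α} {t t' : Finset β}
    (hs : s = s') (ht : t = t') (h1 : s.card = t.card) (h2 : s'.card = t'.card)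
    (x : α) (hx : x ∈ s) (hx' : x ∈ s') :
    ((Finset.equivOfCardEq h1 ⟨x, hx⟩ : {y // y ∈ t}) : β)
      = ((Finset.equivOfCardEq h2 ⟨x, hx'⟩ : {y // y ∈ t'}) : β) := by
  subst hs; subst ht; rfl

lemma matching  (a : Fin m₁ → (Fin n → ℚ)) (b : Fin m₂ → (Fin n → ℚ))
    (h01 : ∀ j i, a j i = 0 ∨ a j i = 1)
    (hnz : ∀ j, a j ≠ 0)
    (hbint : ∀ k i, isInt (b k i))
    (MI : ∀ u, ∑ j, |a j ⬝ᵥ u| = ∑ k, |b k ⬝ᵥ u|)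
    (htr : ∑ j, a j ⬝ᵥ a j = ∑ k, b k ⬝ᵥ b k) :
    ∃ θ : Fin m₁ → Fin m₂, Function.Injective θ ∧
      (∀ j, b (θ j) = a j ∨ b (θ j) = -a j) ∧
      (∀ k, (∀ j, θ j ≠ k) → b k = 0) := by
  classical
  -- F1 : parallel 0/1 rows are equal
  have hone : ∀ j, ∃ i, a j i = 1 := by
    intro j
    have : ∃ i, a j i ≠ 0 := by
      by_contra h; push_neg at h; exact hnz j (funext h)
    obtain ⟨i, hi⟩ := this
    exact ⟨i, (h01 j i).resolve_left hi⟩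
  have F1 : ∀ j j', (∃ c : ℚ, a j' = c • a j) → a j' = a j := by
    rintro j j' ⟨c, hc⟩
    obtain ⟨i, hi⟩ := hone j
    have hc0 : c = a j' i := by rw [hc]; simp [hi]
    rcases h01 j' i with h | h
    · exfalso; apply hnz j'; rw [hc, hc0, h, zero_smul]
    · rw [hc, hc0, h, one_smul]
  -- F2 : coefficients against 0/1 rows are integers
  have F2 : ∀ (k : Fin m₂) (j : Fin m₁) (c : ℚ), b k = c • a j → isInt c := by
    intro k j c hc
    obtain ⟨i, hi⟩ := hone j
    have : c = b k i := by rw [hc]; simp [hi]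
    rw [this]; exact hbint k i
  -- the classes
  set J : Fin m₁ → Finset (Fin m₁) :=
    fun j => Finset.univ.filter (fun j' => a j' = a j) with hJdef
  set K : Fin m₁ → Finset (Fin m₂) :=
    fun j => Finset.univ.filter (fun k => b k ≠ 0 ∧ ∃ c : ℚ, b k = c • a j) with hKdef
  have hJself : ∀ j, j ∈ J j := fun j => Finset.mem_filter.mpr ⟨Finset.mem_univ _, rfl⟩
  have hJcard : ∀ j, 0 < (J j).card := fun j => Finset.card_pos.mpr ⟨j, hJself j⟩
  have hJeq : ∀ j j', a j' = a j → J j' = J j := by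
    intro j j' h
    apply Finset.filter_congr
    intro x _
    rw [h]
  -- the line identity, in class form
  have LINE : ∀ j, ((J j).card : ℚ) * (a j ⬝ᵥ a j) = ∑ k ∈ K j, |b k ⬝ᵥ a j| := by
    intro j
    have h := line_identity a b MI (a j) (hnz j)
    have hL : ∑ j' ∈ Finset.univ.filter (fun j' => ∃ c : ℚ, a j' = c • a j), |a j' ⬝ᵥ a j|
        = ((J j).card : ℚ) * (a j ⬝ᵥ a j) := by
      have hset : Finset.univ.filter (fun j' => ∃ c : ℚ, a j' = c • a j) = J j := by
        apply Finset.filter_congr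
        intro x _
        exact ⟨fun h' => F1 j x h', fun h' => ⟨1, by rw [h', one_smul]⟩⟩
      rw [hset]
      rw [Finset.sum_congr rfl (fun j' hj' => by
        rw [(Finset.mem_filter.mp hj').2, abs_of_pos (dot_pos (hnz j))])]
      rw [Finset.sum_const, nsmul_eq_mul]
    have hR : ∑ k ∈ Finset.univ.filter (fun k => ∃ c : ℚ, b k = c • a j), |b k ⬝ᵥ a j|
        = ∑ k ∈ K j, |b k ⬝ᵥ a j| := by
      symm
      apply Finset.sum_subset
      · intro k hk
        rcases Finset.mem_filter.mp hk with ⟨_, _, hpar⟩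
        exact Finset.mem_filter.mpr ⟨Finset.mem_univ _, hpar⟩
      · intro k hk hnk
        have hb0 : b k = 0 := by
          by_contra hb
          exact hnk (Finset.mem_filter.mpr ⟨Finset.mem_univ _, hb, (Finset.mem_filter.mp hk).2⟩)
        rw [hb0]; simp
    rw [← hL, ← hR, h]
  -- every nonzero b is a nonzero multiple of some a row
  have F4 : ∀ k, b k ≠ 0 → ∃ (j : Fin m₁) (c : ℚ), b k = c • a j ∧ c ≠ 0 := by
    intro k hk
    have h := line_identity a b MI (b k) hk
    have hRpos : 0 < ∑ k' ∈ Finset.univ.filter (fun k' => ∃ c : ℚ, b k' = c • b k), |b k' ⬝ᵥ b k| := by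
      apply Finset.sum_pos'
      · intro k' _; exact abs_nonneg _
      · refine ⟨k, Finset.mem_filter.mpr ⟨Finset.mem_univ _, 1, (one_smul ℚ (b k)).symm⟩, ?_⟩
        rw [abs_of_pos (dot_pos hk)]
        exact dot_pos hk
    rw [← h] at hRpos
    have hne : (Finset.univ.filter (fun j => ∃ c : ℚ, a j = c • b k)).Nonempty := by
      by_contra hcon
      rw [Finset.not_nonempty_iff_eq_empty.mp hcon] at hRpos
      simp at hRpos
    obtain ⟨j, hj⟩ := hne
    obtain ⟨c, hc⟩ := (Finset.mem_filter.mp hj).2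
    have hc0 : c ≠ 0 := by
      intro h0
      exact hnz j (by rw [hc, h0, zero_smul])
    exact ⟨j, c⁻¹, by rw [hc, smul_smul, inv_mul_cancel₀ hc0, one_smul], inv_ne_zero hc0⟩
  -- trivial case m₁ = 0
  rcases Nat.eq_zero_or_pos m₁ with hm | hm
  · subst hm
    refine ⟨fun j => j.elim0, fun j => j.elim0, fun j => j.elim0, ?_⟩
    intro k _
    by_contra hk
    obtain ⟨j, _, _⟩ := F4 k hk
    exact j.elim0
  have : Nonempty (Fin m₁) := ⟨⟨0, hm⟩⟩
  -- choice of representative for each nonzero b k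
  have hch : ∀ k : Fin m₂, ∃ p : Fin m₁ × ℚ, b k ≠ 0 → (b k = p.2 • a p.1 ∧ p.2 ≠ 0) := by
    intro k
    by_cases hk : b k = 0
    · exact ⟨⟨Classical.arbitrary _, 0⟩, fun h => absurd hk h⟩
    · obtain ⟨j, c, hc, hc0⟩ := F4 k hk
      exact ⟨⟨j, c⟩, fun _ => ⟨hc, hc0⟩⟩
  choose p hp using hch
  set jf : Fin m₂ → Fin m₁ := fun k => (p k).1 with hjf
  set cf : Fin m₂ → ℚ := fun k => (p k).2 with hcf
  -- membership in K characterized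
  have hKiff : ∀ j k, k ∈ K j ↔ (b k ≠ 0 ∧ a j = a (jf k)) := by
    intro j k
    constructor
    · rintro hk
      obtain ⟨-, hk0, c, hc⟩ := Finset.mem_filter.mp hk
      refine ⟨hk0, ?_⟩
      obtain ⟨hrep, hc0'⟩ := hp k hk0
      have hcne : c ≠ 0 := fun h0 => hk0 (by rw [hc, h0, zero_smul])
      apply F1
      refine ⟨cf k / c, ?_⟩
      have : a j = c⁻¹ • b k := by rw [hc, smul_smul, inv_mul_cancel₀ hcne, one_smul]
      rw [this, hrep, smul_smul]
      congr 1
      field_simp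
      rfl
    · rintro ⟨hk0, haj⟩
      obtain ⟨hrep, hc0⟩ := hp k hk0
      exact Finset.mem_filter.mpr ⟨Finset.mem_univ _, hk0, cf k, by rw [hrep, haj]⟩
  -- double counting
  set W : Fin m₁ → Fin m₂ → ℚ :=
    fun j k => if k ∈ K j then |b k ⬝ᵥ a j| / ((J j).card : ℚ) else 0 with hW
  have claim1 : ∀ j, ∑ k, W j k = a j ⬝ᵥ a j := by
    intro j
    have : ∑ k, W j k = ∑ k ∈ K j, |b k ⬝ᵥ a j| / ((J j).card : ℚ) := by
      rw [Finset.sum_ite_mem, Finset.univ_inter]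
    rw [this, ← Finset.sum_div, ← LINE j, mul_comm, mul_div_assoc, div_self, mul_one]
    exact Nat.cast_ne_zero.mpr (Nat.pos_iff_ne_zero.mp (hJcard j))
  have claim2 : ∀ k, ∑ j, W j k
      = if b k = 0 then 0 else |cf k| * (a (jf k) ⬝ᵥ a (jf k)) := by
    intro k
    by_cases hk : b k = 0
    · rw [if_pos hk]
      apply Finset.sum_eq_zero
      intro j _
      rw [hW]
      simp only
      rw [if_neg]
      intro hmem
      exact ((hKiff j k).mp hmem).1 hk
    · rw [if_neg hk]
      obtain ⟨hrep, hc0⟩ := hp k hk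
      have hmemiff : ∀ j, k ∈ K j ↔ j ∈ J (jf k) := by
        intro j
        rw [hKiff j k, hJdef]
        simp only [Finset.mem_filter, Finset.mem_univ, true_and]
        exact ⟨fun h => h.2, fun h => ⟨hk, h⟩⟩
      have hstep : ∑ j, W j k = ∑ j ∈ J (jf k), |b k ⬝ᵥ a j| / ((J j).card : ℚ) := by
        have : ∀ j, W j k = if j ∈ J (jf k) then |b k ⬝ᵥ a j| / ((J j).card : ℚ) else 0 := by
          intro j
          rw [hW]
          simp only
          exact if_congr (hmemiff j) rfl rfl
        rw [Finset.sum_congr rfl (fun j _ => this j), Finset.sum_ite_mem, Finset.univ_inter]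
      have hconst : ∀ j ∈ J (jf k), |b k ⬝ᵥ a j| / ((J j).card : ℚ)
          = |b k ⬝ᵥ a (jf k)| / ((J (jf k)).card : ℚ) := by
        intro j hj
        have haj : a j = a (jf k) := (Finset.mem_filter.mp hj).2
        rw [haj, hJeq (jf k) j haj]
      have hcardne : ((J (jf k)).card : ℚ) ≠ 0 :=
        Nat.cast_ne_zero.mpr (Nat.pos_iff_ne_zero.mp (hJcard (jf k)))
      rw [hstep, Finset.sum_congr rfl hconst, Finset.sum_const, nsmul_eq_mul,
        mul_div_assoc']
      rw [mul_comm, mul_div_assoc, div_self hcardne, mul_one]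
      rw [hrep, smul_dotProduct, smul_eq_mul, abs_mul, abs_of_pos (dot_pos (hnz (jf k)))]
  -- sum identities
  have hsum1 : ∑ j, (a j ⬝ᵥ a j) = ∑ k,
      (if b k = 0 then 0 else |cf k| * (a (jf k) ⬝ᵥ a (jf k))) := by
    rw [← Finset.sum_congr rfl (fun j (_ : j ∈ Finset.univ) => claim1 j),
      ← Finset.sum_congr rfl (fun k (_ : k ∈ Finset.univ) => claim2 k)]
    exact Finset.sum_comm
  have hsum2 : ∑ k, (b k ⬝ᵥ b k) = ∑ k,
      (if b k = 0 then 0 else (cf k)^2 * (a (jf k) ⬝ᵥ a (jf k))) := by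
    apply Finset.sum_congr rfl
    intro k _
    by_cases hk : b k = 0
    · rw [if_pos hk, hk]; simp
    · rw [if_neg hk, (hp k hk).1, smul_dotProduct, dotProduct_smul]
      simp only [smul_eq_mul]
      ring
  -- each coefficient has absolute value 1
  have S1 : ∀ k, b k ≠ 0 → cf k = 1 ∨ cf k = -1 := by
    intro k hk
    have hzero : ∑ k, ((if b k = 0 then 0 else (cf k)^2 * (a (jf k) ⬝ᵥ a (jf k)))
        - (if b k = 0 then 0 else |cf k| * (a (jf k) ⬝ᵥ a (jf k)))) = 0 := by
      rw [Finset.sum_sub_distrib, ← hsum1, ← hsum2, htr, sub_self]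
    have hnonneg : ∀ k' : Fin m₂, k' ∈ Finset.univ → 0 ≤
        ((if b k' = 0 then 0 else (cf k')^2 * (a (jf k') ⬝ᵥ a (jf k')))
        - (if b k' = 0 then 0 else |cf k'| * (a (jf k') ⬝ᵥ a (jf k')))) := by
      intro k' _
      by_cases hk' : b k' = 0
      · simp [hk']
      · rw [if_neg hk', if_neg hk', ← sub_mul]
        apply mul_nonneg _ (le_of_lt (dot_pos (hnz (jf k'))))
        obtain ⟨hrep', hc0'⟩ := hp k' hk'
        have hcfne : cf k' ≠ 0 := hc0'
        obtain ⟨z, hz⟩ := F2 k' (jf k') (cf k') hrep'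
        have hz0 : z ≠ 0 := by
          intro h0; apply hcfne; rw [hz, h0]; norm_num
        have h1z : (1 : ℚ) ≤ |(z : ℚ)| := by
          rw [← Int.cast_abs]
          exact_mod_cast Int.one_le_abs hz0
        rw [hz]
        nlinarith [sq_abs ((z:ℚ)), abs_nonneg ((z:ℚ))]
    have heach := (Finset.sum_eq_zero_iff_of_nonneg hnonneg).mp hzero k (Finset.mem_univ k)
    rw [if_neg hk, if_neg hk, ← sub_mul] at heach
    have hdotpos := dot_pos (hnz (jf k))
    have hfac : (cf k)^2 - |cf k| = 0 := by
      rcases mul_eq_zero.mp heach with h | h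
      · exact h
      · exact absurd h (ne_of_gt hdotpos)
    obtain ⟨hrep', hc0'⟩ := hp k hk
    have hcfne : cf k ≠ 0 := hc0'
    have habs : |cf k| = 1 := by
      have h0 : |cf k| ≠ 0 := abs_ne_zero.mpr hcfne
      have : |cf k| * (|cf k| - 1) = 0 := by
        nlinarith [sq_abs (cf k), hfac]
      rcases mul_eq_zero.mp this with h | h
      · exact absurd h h0
      · linarith
    rcases abs_eq (by norm_num : (0:ℚ) ≤ 1) |>.mp habs with h | h
    · left; exact h
    · right; exact h
  -- membership in K j forces b k = ± a j
  have memK : ∀ j k, k ∈ K j → b k = a j ∨ b k = -a j := by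
    intro j k hk
    obtain ⟨hk0, haj⟩ := (hKiff j k).mp hk
    obtain ⟨hrep, hc0⟩ := hp k hk0
    rcases S1 k hk0 with h1 | h1
    · left; rw [hrep, show (p k).2 = cf k from rfl, h1, one_smul, haj]
    · right; rw [hrep, show (p k).2 = cf k from rfl, h1, haj]
      ext i; simp; rfl
  -- card equality
  have cardJK : ∀ j, (J j).card = (K j).card := by
    intro j
    have h := LINE j
    have hterm : ∀ k ∈ K j, |b k ⬝ᵥ a j| = a j ⬝ᵥ a j := by
      intro k hk
      rcases memK j k hk with h1 | h1
      · rw [h1, abs_of_pos (dot_pos (hnz j))]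
      · rw [h1, neg_dotProduct, abs_neg, abs_of_pos (dot_pos (hnz j))]
    rw [Finset.sum_congr rfl hterm, Finset.sum_const, nsmul_eq_mul] at h
    have hd := dot_pos (hnz j)
    have := mul_right_cancel₀ (ne_of_gt hd) h
    exact_mod_cast this
  -- the matching
  set e : ∀ j : Fin m₁, {x // x ∈ J j} ≃ {x // x ∈ K j} :=
    fun j => Finset.equivOfCardEq (cardJK j) with he
  set θ : Fin m₁ → Fin m₂ := fun j => ((e j) ⟨j, hJself j⟩ : Fin m₂) with hθ
  have hθK : ∀ j, θ j ∈ K j := fun j => ((e j) ⟨j, hJself j⟩).2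
  have hθpm : ∀ j, b (θ j) = a j ∨ b (θ j) = -a j := fun j => memK j (θ j) (hθK j)
  have hKeq : ∀ j j', a j' = a j → K j' = K j := by
    intro j j' hjj
    apply Finset.filter_congr
    intro x _
    rw [hjj]
  refine ⟨θ, ?_, hθpm, ?_⟩
  · -- injectivity
    intro j j' hjj
    have hb := hθK j
    have hb' := hθK j'
    rw [hjj] at hb
    have hbne : b (θ j') ≠ 0 := ((hKiff j (θ j')).mp hb).1
    have haeq : a j = a j' := by
      rw [((hKiff j (θ j')).mp hb).2, ((hKiff j' (θ j')).mp hb').2]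
    have hJ12 : J j = J j' := hJeq j' j haeq
    have hK12 : K j = K j' := hKeq j' j haeq
    have hcoe := equiv_coe_eq hJ12 hK12 (cardJK j) (cardJK j') j (hJself j)
      (hJ12 ▸ hJself j)
    have : θ j = ((Finset.equivOfCardEq (cardJK j') ⟨j, hJ12 ▸ hJself j⟩ : {x // x ∈ K j'}) : Fin m₂) := hcoe
    rw [hjj] at this
    have hsub : (Finset.equivOfCardEq (cardJK j') ⟨j, hJ12 ▸ hJself j⟩ : {x // x ∈ K j'})
        = (Finset.equivOfCardEq (cardJK j') ⟨j', hJself j'⟩ : {x // x ∈ K j'}) :=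
      Subtype.coe_injective this.symm
    have := (Finset.equivOfCardEq (cardJK j')).injective hsub
    exact Subtype.mk_eq_mk.mp this
  · -- covering
    intro k hcov
    by_contra hk
    have hkK : k ∈ K (jf k) := (hKiff (jf k) k).mpr ⟨hk, rfl⟩
    set x := (e (jf k)).symm ⟨k, hkK⟩ with hx
    have hxJ : (x : Fin m₁) ∈ J (jf k) := x.2
    have haeq : a (x : Fin m₁) = a (jf k) := (Finset.mem_filter.mp hxJ).2
    have hJ12 : J (x : Fin m₁) = J (jf k) := hJeq (jf k) _ haeq
    have hK12 : K (x : Fin m₁) = K (jf k) := hKeq (jf k) _ haeq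
    have hcoe := equiv_coe_eq hJ12 hK12 (cardJK (x : Fin m₁)) (cardJK (jf k))
      (x : Fin m₁) (hJself _) hxJ
    apply hcov (x : Fin m₁)
    have hθx : θ (x : Fin m₁)
        = ((Finset.equivOfCardEq (cardJK (jf k)) ⟨(x : Fin m₁), hxJ⟩ : {y // y ∈ K (jf k)}) : Fin m₂) := hcoe
    rw [hθx]
    have : (⟨(x : Fin m₁), hxJ⟩ : {y // y ∈ J (jf k)}) = x := Subtype.ext rfl
    rw [this, hx]
    simp [he]

def qc (y : Fin n → ℤ) : Fin n → ℚ := fun i => (y i : ℚ)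

lemma qc_dot (v w : Fin n → ℤ) : qc v ⬝ᵥ qc w = ((v ⬝ᵥ w : ℤ) : ℚ) := by
  simp [qc, dotProduct]

lemma mem_intVecs_qc (y : Fin n → ℤ) : qc y ∈ intVecs (Fin n) := fun i => ⟨y i, rfl⟩

lemma intVecs_rep {y : Fin n → ℚ} (hy : y ∈ intVecs (Fin n)) : ∃ y' : Fin n → ℤ, y = qc y' := by
  choose f hf using hy
  exact ⟨f, funext hf⟩

lemma span_intVecs (x : Fin n → ℚ) : x ∈ Submodule.span ℚ (intVecs (Fin n)) := by
  rw [pi_eq_sum_univ x]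
  apply Submodule.sum_mem
  intro i _
  apply Submodule.smul_mem
  apply Submodule.subset_span
  intro j
  exact ⟨if i = j then 1 else 0, by simp [apply_ite (Int.cast : ℤ → ℚ)]⟩

lemma bridge (B : Matrix (Fin n) (Fin n) ℤ)
    (A₁ : Matrix (Fin m₁) (Fin n) ℤ) (A₂ : Matrix (Fin m₂) (Fin n) ℤ)
    (hpos : ∀ x : Fin n → ℚ, x ≠ 0 → 0 < qform B x x)
    (hA₁ : A₁ᵀ * A₁ = B)
    (hinto₁ : ∀ χ : Fin m₁ → ℤ, (∀ j, χ j = 1 ∨ χ j = -1) →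
      ∀ ξ ∈ dualOf B (intVecs (Fin n)),
        (∀ y : Fin n → ℤ, ((χ ⬝ᵥ (A₁ *ᵥ y) : ℤ) : ℚ) = qform B ξ (fun k => (y k : ℚ))) →
        ξ ∈ ShortOf B (intVecs (Fin n)))
    (hsurj₂ : ∀ ξ ∈ ShortOf B (intVecs (Fin n)), ∃ χ : Fin m₂ → ℤ,
      (∀ j, χ j = 1 ∨ χ j = -1) ∧
      ∀ y : Fin n → ℤ, ((χ ⬝ᵥ (A₂ *ᵥ y) : ℤ) : ℚ) = qform B ξ (fun k => (y k : ℚ)))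
    (χ : Fin m₁ → ℤ) (hχ : ∀ j, χ j = 1 ∨ χ j = -1) :
    ∃ χ' : Fin m₂ → ℤ, (∀ k, χ' k = 1 ∨ χ' k = -1) ∧ A₂ᵀ *ᵥ χ' = A₁ᵀ *ᵥ χ := by
  set Bq : Matrix (Fin n) (Fin n) ℚ := B.map (Int.cast : ℤ → ℚ) with hBq
  have hBsymm : Bqᵀ = Bq := by
    rw [hBq, ← Matrix.transpose_map, show Bᵀ = B from by rw [← hA₁]; simp [Matrix.transpose_mul]]
  -- solve Bq *ᵥ ξ = cast (A₁ᵀ *ᵥ χ)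
  have hinj : Function.Injective (Matrix.mulVecLin Bq) := by
    rw [← LinearMap.ker_eq_bot]
    rw [LinearMap.ker_eq_bot']
    intro x hx
    by_contra hx0
    have := hpos x hx0
    have : qform B x x = 0 := by
      show x ⬝ᵥ (Bq *ᵥ x) = 0
      rw [show Bq *ᵥ x = 0 from hx]
      simp
    linarith
  have hsurj : Function.Surjective (Matrix.mulVecLin Bq) :=
    LinearMap.injective_iff_surjective.mp hinj
  obtain ⟨ξ, hξ⟩ := hsurj (qc (A₁ᵀ *ᵥ χ))
  have hξ' : Bq *ᵥ ξ = qc (A₁ᵀ *ᵥ χ) := hξ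
  -- the key evaluation formula
  have heval : ∀ y : Fin n → ℚ, qform B ξ y = qc (A₁ᵀ *ᵥ χ) ⬝ᵥ y := by
    intro y
    show ξ ⬝ᵥ (Bq *ᵥ y) = _
    rw [Matrix.dotProduct_mulVec, ← Matrix.mulVec_transpose, hBsymm, hξ']
  have hdual : ξ ∈ dualOf B (intVecs (Fin n)) := by
    refine ⟨span_intVecs ξ, fun y hy => ?_⟩
    obtain ⟨y', rfl⟩ := intVecs_rep hy
    rw [heval, qc_dot]
    exact ⟨_, rfl⟩
  have hfunc : ∀ y : Fin n → ℤ, ((χ ⬝ᵥ (A₁ *ᵥ y) : ℤ) : ℚ) = qform B ξ (fun k => (y k : ℚ)) := by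
    intro y
    rw [show (fun k => ((y k : ℚ))) = qc y from rfl, heval, qc_dot]
    congr 1
    rw [Matrix.dotProduct_mulVec, ← Matrix.mulVec_transpose]
  have hshort := hinto₁ χ hχ ξ hdual hfunc
  obtain ⟨χ', hχ'sgn, hχ'⟩ := hsurj₂ ξ hshort
  refine ⟨χ', hχ'sgn, ?_⟩
  funext i
  have h1 := hχ' (Pi.single i 1)
  have h2 := hfunc (Pi.single i 1)
  rw [← h2] at h1
  have : χ' ⬝ᵥ A₂ *ᵥ Pi.single i 1 = χ ⬝ᵥ A₁ *ᵥ Pi.single i 1 := by exact_mod_cast h1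
  rw [Matrix.dotProduct_mulVec, ← Matrix.mulVec_transpose, dotProduct_single,
      Matrix.dotProduct_mulVec, ← Matrix.mulVec_transpose, dotProduct_single] at this
  simpa using this

end RigidAux

section MainAux
variable {n : ℕ}

lemma mulVec_cast {m : ℕ} (A : Matrix (Fin m) (Fin n) ℤ) (χ : Fin m → ℤ) (i : Fin n) :
    ∑ k, (χ k : ℚ) * (A k i : ℚ) = ((Aᵀ *ᵥ χ) i : ℚ) := by
  simp only [Matrix.mulVec, dotProduct, Matrix.transpose_apply]
  push_cast
  apply Finset.sum_congr rfl
  intro k _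
  ring

lemma trace_rows {m : ℕ} (A : Matrix (Fin m) (Fin n) ℤ) :
    ∑ j, (fun i => (A j i : ℚ)) ⬝ᵥ (fun i => (A j i : ℚ))
      = ((Matrix.trace (Aᵀ * A) : ℤ) : ℚ) := by
  simp only [Matrix.trace, Matrix.diag, Matrix.mul_apply, Matrix.transpose_apply, dotProduct]
  push_cast
  rw [Finset.sum_comm]

end MainAux

/-- Under the rigid-embedding hypotheses, there is an isometric
embedding `ι : Z₁ → Z₂` with `ι₂ = ι ∘ ι₁`. -/
theorem stmt_12 (n m₁ m₂ : ℕ) (B : Matrix (Fin n) (Fin n) ℤ)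
    (A₁ : Matrix (Fin m₁) (Fin n) ℤ) (A₂ : Matrix (Fin m₂) (Fin n) ℤ)
    (hpos : ∀ x : Fin n → ℚ, x ≠ 0 → 0 < qform B x x)
    (hA₁ : A₁ᵀ * A₁ = B) (hA₂ : A₂ᵀ * A₂ = B)
    (h01 : ∀ j k, A₁ j k = 0 ∨ A₁ j k = 1)
    (hfull : ∀ j, ∃ k, A₁ j k ≠ 0)
    (hinto₁ : ∀ χ : Fin m₁ → ℤ, (∀ j, χ j = 1 ∨ χ j = -1) →
      ∀ ξ ∈ dualOf B (intVecs (Fin n)),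
        (∀ y : Fin n → ℤ, ((χ ⬝ᵥ (A₁ *ᵥ y) : ℤ) : ℚ) = qform B ξ (fun k => (y k : ℚ))) →
        ξ ∈ ShortOf B (intVecs (Fin n)))
    (hinto₂ : ∀ χ : Fin m₂ → ℤ, (∀ j, χ j = 1 ∨ χ j = -1) →
      ∀ ξ ∈ dualOf B (intVecs (Fin n)),
        (∀ y : Fin n → ℤ, ((χ ⬝ᵥ (A₂ *ᵥ y) : ℤ) : ℚ) = qform B ξ (fun k => (y k : ℚ))) →
        ξ ∈ ShortOf B (intVecs (Fin n)))
    (hsurj₁ : ∀ ξ ∈ ShortOf B (intVecs (Fin n)), ∃ χ : Fin m₁ → ℤ,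
      (∀ j, χ j = 1 ∨ χ j = -1) ∧
      ∀ y : Fin n → ℤ, ((χ ⬝ᵥ (A₁ *ᵥ y) : ℤ) : ℚ) = qform B ξ (fun k => (y k : ℚ)))
    (hsurj₂ : ∀ ξ ∈ ShortOf B (intVecs (Fin n)), ∃ χ : Fin m₂ → ℤ,
      (∀ j, χ j = 1 ∨ χ j = -1) ∧
      ∀ y : Fin n → ℤ, ((χ ⬝ᵥ (A₂ *ᵥ y) : ℤ) : ℚ) = qform B ξ (fun k => (y k : ℚ))) :
    ∃ M : Matrix (Fin m₂) (Fin m₁) ℤ, Mᵀ * M = 1 ∧ A₂ = M * A₁ := by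
  classical
  set a : Fin m₁ → (Fin n → ℚ) := fun j i => (A₁ j i : ℚ) with ha
  set b : Fin m₂ → (Fin n → ℚ) := fun k i => (A₂ k i : ℚ) with hb
  have h01q : ∀ j i, a j i = 0 ∨ a j i = 1 := by
    intro j i
    rcases h01 j i with h | h <;> [left; right] <;> simp [ha, h]
  have hnzq : ∀ j, a j ≠ 0 := by
    intro j hj
    obtain ⟨i, hi⟩ := hfull j
    apply hi
    have := congrFun hj i
    simpa [ha] using this
  have hbintq : ∀ k i, isInt (b k i) := fun k i => ⟨A₂ k i, rfl⟩
  have hbr12 := bridge B A₁ A₂ hpos hA₁ hinto₁ hsurj₂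
  have hbr21 := bridge B A₂ A₁ hpos hA₂ hinto₂ hsurj₁
  have MI : ∀ u, ∑ j, |a j ⬝ᵥ u| = ∑ k, |b k ⬝ᵥ u| := by
    intro u
    apply le_antisymm
    · apply half_ineq a b _ u
      intro χ hχ
      obtain ⟨χ', hχ', heq⟩ := hbr12 χ hχ
      refine ⟨χ', hχ', fun i => ?_⟩
      calc ∑ k, (χ' k : ℚ) * b k i = ((A₂ᵀ *ᵥ χ') i : ℚ) := mulVec_cast A₂ χ' i
        _ = ((A₁ᵀ *ᵥ χ) i : ℚ) := by rw [heq]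
        _ = ∑ j, (χ j : ℚ) * a j i := (mulVec_cast A₁ χ i).symm
    · apply half_ineq b a _ u
      intro χ hχ
      obtain ⟨χ', hχ', heq⟩ := hbr21 χ hχ
      refine ⟨χ', hχ', fun i => ?_⟩
      calc ∑ j, (χ' j : ℚ) * a j i = ((A₁ᵀ *ᵥ χ') i : ℚ) := mulVec_cast A₁ χ' i
        _ = ((A₂ᵀ *ᵥ χ) i : ℚ) := by rw [heq]
        _ = ∑ k, (χ k : ℚ) * b k i := (mulVec_cast A₂ χ i).symm
  have htr : ∑ j, a j ⬝ᵥ a j = ∑ k, b k ⬝ᵥ b k := by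
    have t1 : ∑ j, a j ⬝ᵥ a j = ((Matrix.trace (A₁ᵀ * A₁) : ℤ) : ℚ) := trace_rows A₁
    have t2 : ∑ k, b k ⬝ᵥ b k = ((Matrix.trace (A₂ᵀ * A₂) : ℤ) : ℚ) := trace_rows A₂
    rw [t1, t2, hA₁, hA₂]
  obtain ⟨θ, hinj, hpm, hcov⟩ := matching a b h01q hnzq hbintq MI htr
  set ε : Fin m₁ → ℤ := fun j => if b (θ j) = a j then 1 else -1 with hε
  have hbθ : ∀ j, b (θ j) = (ε j : ℚ) • a j := by
    intro j
    have hne0 : a j ≠ -a j := by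
      intro hcon
      apply hnzq j
      funext i
      have := congrFun hcon i
      simp only [Pi.neg_apply] at this
      have h0 : a j i = 0 := by linarith
      simpa using h0
    rcases hpm j with h | h
    · have hε1 : ε j = 1 := by simp only [hε]; rw [if_pos h]
      rw [hε1, h]
      push_cast
      rw [one_smul]
    · have hne : b (θ j) ≠ a j := by
        rw [h]
        intro hc
        exact hne0 hc.symm
      have hε1 : ε j = -1 := by simp only [hε]; rw [if_neg hne]
      rw [hε1, h]
      push_cast
      rw [neg_smul, one_smul]
  have hεsq : ∀ j, ε j * ε j = 1 := by
    intro j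
    simp only [hε]
    split_ifs <;> norm_num
  refine ⟨Matrix.of fun k j => if θ j = k then ε j else 0, ?_, ?_⟩
  · ext j j'
    rw [Matrix.mul_apply]
    simp only [Matrix.transpose_apply, Matrix.of_apply]
    by_cases hjj : j = j'
    · subst hjj
      rw [Matrix.one_apply_eq]
      have : ∀ k, (if θ j = k then ε j else 0) * (if θ j = k then ε j else 0)
          = if θ j = k then ε j * ε j else 0 := by
        intro k; split_ifs <;> ring
      rw [Finset.sum_congr rfl (fun k _ => this k), Finset.sum_ite_eq, if_pos (Finset.mem_univ _), hεsq]
    · rw [Matrix.one_apply_ne hjj]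
      apply Finset.sum_eq_zero
      intro k _
      by_cases h1 : θ j = k
      · by_cases h2 : θ j' = k
        · exact absurd (hinj (h1.trans h2.symm)) hjj
        · simp [h1, h2]
      · simp [h1]
  · ext k i
    rw [Matrix.mul_apply]; simp only [Matrix.of_apply]
    by_cases hex : ∃ j, θ j = k
    · obtain ⟨j₀, hj₀⟩ := hex
      rw [Finset.sum_eq_single j₀]
      · rw [if_pos hj₀]
        have := congrFun (hbθ j₀) i
        rw [← hj₀]
        have hbv : b (θ j₀) i = (ε j₀ : ℚ) * a j₀ i := by
          rw [this]; simp
        have : ((A₂ (θ j₀) i : ℤ) : ℚ) = ((ε j₀ * A₁ j₀ i : ℤ) : ℚ) := by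
          push_cast
          exact hbv
        exact_mod_cast this
      · intro j _ hj
        rw [if_neg]
        · ring
        · intro hc
          exact hj (hinj (hc.trans hj₀.symm))
      · intro habs
        exact absurd (Finset.mem_univ j₀) habs
    · push_neg at hex
      have hb0 : b k = 0 := hcov k hex
      have : (A₂ k i : ℚ) = 0 := by
        have := congrFun hb0 i
        simpa [hb] using this
      have hz : A₂ k i = 0 := by exact_mod_cast this
      rw [hz]
      symm
      apply Finset.sum_eq_zero
      intro j _
      rw [if_neg (hex j)]
      ring

end Greene
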